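/- arXiv:1703.01869 — 4 statements merged into one kernel-verified Lean document; each statement's English description precedes it below -/
import Mathlib

section
/- Let H = (ℤ/2ℤ)^7 / ⟨a₁a₂a₃a₄a₅a₆a₇⟩ be the group generated by involutions a₁,…,a₇ subject to the single relation a₁a₂a₃a₄a₅a₆a₇ = 1 (so H ≅ (ℤ/2ℤ)^6), and let λ be the automorphism of H induced by the cyclic permutation aⱼ ↦ a_{j+1} (indices mod 7). Then the only subgroups of H invariant under λ are: the trivial subgroup, H itself, K = ⟨a₁a₃a₇, a₂a₃a₅, a₁a₂a₄⟩, and K* = ⟨a₁a₂a₆, a₂a₃a₇, a₁a₃a₄⟩. -/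
/-- The ambient elementary abelian 2-group `(ℤ/2)^7`. -/
abbrev V : Type := Fin 7 → ZMod 2

/-- The all-ones vector, corresponding to the word `a₁a₂a₃a₄a₅a₆a₇`. -/
def allOnes : V := fun _ => 1

/-- The subgroup generated by `a₁a₂a₃a₄a₅a₆a₇`. -/
def W : AddSubgroup V := AddSubgroup.closure {allOnes}

/-- The group `H = (ℤ/2)^7 / ⟨a₁⋯a₇⟩ ≅ (ℤ/2)^6`. -/
abbrev H : Type := V ⧸ W

/-- The generators `a₁, …, a₇` of `H` (0-indexed: `a j` is `a_{j+1}`). -/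
def a (j : Fin 7) : H := QuotientAddGroup.mk (Pi.single j 1)

/-- The automorphism of `V` induced by a permutation of the seven indices,
sending the basis vector `e_j` to `e_{c j}`. -/
def permV (c : Equiv.Perm (Fin 7)) : V ≃+ V where
  toFun v := v ∘ c.symm
  invFun v := v ∘ c
  left_inv v := by funext i; simp
  right_inv v := by funext i; simp
  map_add' v w := rfl

lemma permV_W (c : Equiv.Perm (Fin 7)) :
    W.map (permV c).toAddMonoidHom = W := by
  unfold W
  rw [AddMonoidHom.map_closure, Set.image_singleton]
  rfl

/-- The 7-cycle `j ↦ j+1` on indices. -/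
def cLam : Equiv.Perm (Fin 7) := Equiv.addRight 1

/-- The permutation `(1 2)(3 7)(4 6)` of indices (0-indexed `(0 1)(2 6)(3 5)`). -/
def cZeta : Equiv.Perm (Fin 7) :=
  ⟨![1,0,6,5,4,3,2], ![1,0,6,5,4,3,2], by decide, by decide⟩

/-- The automorphism `λ` of `H`, `a_j ↦ a_{j+1 (mod 7)}`. -/
def lam : H ≃+ H := QuotientAddGroup.congr W W (permV cLam) (permV_W cLam)

/-- The automorphism `ζ` of `H`. -/
def zeta : H ≃+ H := QuotientAddGroup.congr W W (permV cZeta) (permV_W cZeta)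

/-- `K = ⟨a₁a₃a₇, a₂a₃a₅, a₁a₂a₄⟩`. -/
def Ksub : AddSubgroup H :=
  AddSubgroup.closure {a 0 + a 2 + a 6, a 1 + a 2 + a 4, a 0 + a 1 + a 3}

/-- `K* = ⟨a₁a₂a₆, a₂a₃a₇, a₁a₃a₄⟩`. -/
def KsubStar : AddSubgroup H :=
  AddSubgroup.closure {a 0 + a 1 + a 5, a 1 + a 2 + a 6, a 0 + a 2 + a 3}


/-! ### Decidability setup -/

set_option maxRecDepth 100000

lemma V_add_self (v : V) : v + v = 0 := by
  funext i
  exact CharTwo.add_self_eq_zero (v i)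

lemma mem_W_iff (v : V) : v ∈ W ↔ v = 0 ∨ v = allOnes := by
  constructor
  · intro h
    rw [W, AddSubgroup.mem_closure_singleton] at h
    obtain ⟨n, rfl⟩ := h
    rcases Int.even_or_odd n with ⟨m, rfl⟩ | ⟨m, rfl⟩
    · left
      rw [add_zsmul]
      exact V_add_self _
    · right
      rw [add_zsmul, one_zsmul, mul_comm, mul_zsmul, two_zsmul, V_add_self,
        smul_zero, zero_add]
  · rintro (rfl | rfl)
    · exact zero_mem W
    · exact AddSubgroup.subset_closure rfl

instance decW : DecidablePred (· ∈ W) := fun v => decidable_of_iff _ (mem_W_iff v).symm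

instance (priority := high) decRel : ∀ u v : V, Decidable ((QuotientAddGroup.leftRel W).r u v) :=
  fun u v => decidable_of_iff (-u + v ∈ W) (QuotientAddGroup.leftRel_apply).symm

instance (priority := high) decH : DecidableEq H :=
  @Quotient.decidableEq _ (QuotientAddGroup.leftRel W) decRel

/-! ### Explicit descriptions of `K` and `K*` -/

/-- Generators of `K`. -/
def g1 : H := a 0 + a 2 + a 6
def g2 : H := a 1 + a 2 + a 4
def g3 : H := a 0 + a 1 + a 3

/-- Generators of `K*`. -/
def h1 : H := a 0 + a 1 + a 5
def h2 : H := a 1 + a 2 + a 6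
def h3 : H := a 0 + a 2 + a 3

def kv1 : V := ![1,0,1,0,0,0,1]
def kv2 : V := ![0,1,1,0,1,0,0]
def kv3 : V := ![1,1,0,1,0,0,0]
def kv4 : V := ![1,1,0,0,1,0,1]
def kv5 : V := ![0,1,1,1,0,0,1]
def kv6 : V := ![1,0,1,1,1,0,0]
def kv7 : V := ![0,0,0,1,1,0,1]

def sv1 : V := ![1,1,0,0,0,1,0]
def sv2 : V := ![0,1,1,0,0,0,1]
def sv3 : V := ![1,0,1,1,0,0,0]
def sv4 : V := ![1,0,1,0,0,1,1]
def sv5 : V := ![0,1,1,1,0,1,0]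
def sv6 : V := ![1,1,0,1,0,0,1]
def sv7 : V := ![0,0,0,1,0,1,1]

/-- The elements of `K` as a list. -/
def klist : List H :=
  [0, QuotientAddGroup.mk kv1, QuotientAddGroup.mk kv2, QuotientAddGroup.mk kv3,
    QuotientAddGroup.mk kv4, QuotientAddGroup.mk kv5, QuotientAddGroup.mk kv6,
    QuotientAddGroup.mk kv7]

/-- The elements of `K*` as a list. -/
def slist : List H :=
  [0, QuotientAddGroup.mk sv1, QuotientAddGroup.mk sv2, QuotientAddGroup.mk sv3,
    QuotientAddGroup.mk sv4, QuotientAddGroup.mk sv5, QuotientAddGroup.mk sv6,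
    QuotientAddGroup.mk sv7]

/-- `K` as an explicit finite set. -/
def Kset : Finset H := ⟨↑klist, by decide +kernel⟩

/-- `K*` as an explicit finite set. -/
def KstarSet : Finset H := ⟨↑slist, by decide +kernel⟩

lemma mem_Kset {x : H} : x ∈ Kset ↔ x ∈ klist := Finset.mem_mk.trans Multiset.mem_coe

lemma mem_KstarSet {x : H} : x ∈ KstarSet ↔ x ∈ slist := Finset.mem_mk.trans Multiset.mem_coe

lemma add_Kset_bool :
    (klist.all fun x => klist.all fun y => decide (x + y ∈ Kset)) = true := by decide +kernel

lemma add_Kset : ∀ x ∈ Kset, ∀ y ∈ Kset, x + y ∈ Kset := by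
  have h := add_Kset_bool
  simp only [List.all_eq_true, decide_eq_true_eq] at h
  intro x hx y hy
  exact h x (mem_Kset.mp hx) y (mem_Kset.mp hy)

lemma add_KstarSet_bool :
    (slist.all fun x => slist.all fun y => decide (x + y ∈ KstarSet)) = true := by decide +kernel

lemma add_KstarSet : ∀ x ∈ KstarSet, ∀ y ∈ KstarSet, x + y ∈ KstarSet := by
  have h := add_KstarSet_bool
  simp only [List.all_eq_true, decide_eq_true_eq] at h
  intro x hx y hy
  exact h x (mem_KstarSet.mp hx) y (mem_KstarSet.mp hy)

lemma H_neg_self : ∀ v : V, -(QuotientAddGroup.mk v : H) = QuotientAddGroup.mk v := by decide +kernel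

lemma neg_self (x : H) : -x = x := by
  induction x using QuotientAddGroup.induction_on with
  | _ v => exact H_neg_self v

/-- `K` as an explicit subgroup. -/
def KF : AddSubgroup H where
  carrier := ↑Kset
  zero_mem' := by show (0 : H) ∈ Kset; decide +kernel
  add_mem' hx hy := add_Kset _ hx _ hy
  neg_mem' {x} hx := by rw [neg_self]; exact hx

/-- `K*` as an explicit subgroup. -/
def KstarF : AddSubgroup H where
  carrier := ↑KstarSet
  zero_mem' := by show (0 : H) ∈ KstarSet; decide +kernel
  add_mem' hx hy := add_KstarSet _ hx _ hy
  neg_mem' {x} hx := by rw [neg_self]; exact hx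

lemma mem_KF {x : H} : x ∈ KF ↔ x ∈ Kset := Iff.rfl

lemma mem_KstarF {x : H} : x ∈ KstarF ↔ x ∈ KstarSet := Iff.rfl

lemma Ksub_eq_KF : Ksub = KF := by
  have m1 : g1 ∈ Ksub := AddSubgroup.subset_closure (by left; rfl)
  have m2 : g2 ∈ Ksub := AddSubgroup.subset_closure (by right; left; rfl)
  have m3 : g3 ∈ Ksub := AddSubgroup.subset_closure (by right; right; rfl)
  apply le_antisymm
  · rw [Ksub, AddSubgroup.closure_le]
    intro x hx
    simp only [Set.mem_insert_iff, Set.mem_singleton_iff] at hx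
    rcases hx with rfl | rfl | rfl <;>
      · show _ ∈ KF
        rw [mem_KF]
        decide +kernel
  · intro x hx
    rw [mem_KF, mem_Kset, klist] at hx
    simp only [List.mem_cons, List.not_mem_nil, or_false] at hx
    rcases hx with rfl | rfl | rfl | rfl | rfl | rfl | rfl | rfl
    · exact zero_mem _
    · exact (by decide +kernel : (QuotientAddGroup.mk kv1 : H) = g1) ▸ m1
    · exact (by decide +kernel : (QuotientAddGroup.mk kv2 : H) = g2) ▸ m2
    · exact (by decide +kernel : (QuotientAddGroup.mk kv3 : H) = g3) ▸ m3
    · exact (by decide +kernel : (QuotientAddGroup.mk kv4 : H) = g1 + g2) ▸ add_mem m1 m2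
    · exact (by decide +kernel : (QuotientAddGroup.mk kv5 : H) = g1 + g3) ▸ add_mem m1 m3
    · exact (by decide +kernel : (QuotientAddGroup.mk kv6 : H) = g2 + g3) ▸ add_mem m2 m3
    · exact (by decide +kernel : (QuotientAddGroup.mk kv7 : H) = g1 + g2 + g3) ▸
        add_mem (add_mem m1 m2) m3

lemma KsubStar_eq_KstarF : KsubStar = KstarF := by
  have m1 : h1 ∈ KsubStar := AddSubgroup.subset_closure (by left; rfl)
  have m2 : h2 ∈ KsubStar := AddSubgroup.subset_closure (by right; left; rfl)
  have m3 : h3 ∈ KsubStar := AddSubgroup.subset_closure (by right; right; rfl)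
  apply le_antisymm
  · rw [KsubStar, AddSubgroup.closure_le]
    intro x hx
    simp only [Set.mem_insert_iff, Set.mem_singleton_iff] at hx
    rcases hx with rfl | rfl | rfl <;>
      · show _ ∈ KstarF
        rw [mem_KstarF]
        decide +kernel
  · intro x hx
    rw [mem_KstarF, mem_KstarSet, slist] at hx
    simp only [List.mem_cons, List.not_mem_nil, or_false] at hx
    rcases hx with rfl | rfl | rfl | rfl | rfl | rfl | rfl | rfl
    · exact zero_mem _
    · exact (by decide +kernel : (QuotientAddGroup.mk sv1 : H) = h1) ▸ m1
    · exact (by decide +kernel : (QuotientAddGroup.mk sv2 : H) = h2) ▸ m2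
    · exact (by decide +kernel : (QuotientAddGroup.mk sv3 : H) = h3) ▸ m3
    · exact (by decide +kernel : (QuotientAddGroup.mk sv4 : H) = h1 + h2) ▸ add_mem m1 m2
    · exact (by decide +kernel : (QuotientAddGroup.mk sv5 : H) = h1 + h3) ▸ add_mem m1 m3
    · exact (by decide +kernel : (QuotientAddGroup.mk sv6 : H) = h2 + h3) ▸ add_mem m2 m3
    · exact (by decide +kernel : (QuotientAddGroup.mk sv7 : H) = h1 + h2 + h3) ▸
        add_mem (add_mem m1 m2) m3

/-! ### The isotypic projections -/

/-- The projection `λ + λ² + λ⁴` onto the `K`-component. -/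
def p2 (x : H) : H := lam x + lam (lam x) + lam (lam (lam (lam x)))

/-- The projection `1 + λ + λ² + λ⁴` onto the `K*`-component. -/
def p1 (x : H) : H := x + lam x + lam (lam x) + lam (lam (lam (lam x)))

lemma p2_mem_aux : ∀ v : V, p2 (QuotientAddGroup.mk v) ∈ Kset := by decide +kernel

lemma p1_mem_aux : ∀ v : V, p1 (QuotientAddGroup.mk v) ∈ KstarSet := by decide +kernel

lemma p_sum_aux : ∀ v : V, p1 (QuotientAddGroup.mk v) + p2 (QuotientAddGroup.mk v)
    = QuotientAddGroup.mk v := by decide +kernel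

lemma p2_mem (x : H) : p2 x ∈ Kset := by
  induction x using QuotientAddGroup.induction_on with
  | _ v => exact p2_mem_aux v

lemma p1_mem (x : H) : p1 x ∈ KstarSet := by
  induction x using QuotientAddGroup.induction_on with
  | _ v => exact p1_mem_aux v

lemma p_sum (x : H) : p1 x + p2 x = x := by
  induction x using QuotientAddGroup.induction_on with
  | _ v => exact p_sum_aux v

lemma lam_Kset_bool : (klist.all fun x => decide (lam x ∈ Kset)) = true := by decide +kernel

lemma lam_Kset : ∀ x ∈ Kset, lam x ∈ Kset := by
  have h := lam_Kset_bool
  simp only [List.all_eq_true, decide_eq_true_eq] at h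
  intro x hx
  exact h x (mem_Kset.mp hx)

lemma lam_KstarSet_bool : (slist.all fun x => decide (lam x ∈ KstarSet)) = true := by decide +kernel

lemma lam_KstarSet : ∀ x ∈ KstarSet, lam x ∈ KstarSet := by
  have h := lam_KstarSet_bool
  simp only [List.all_eq_true, decide_eq_true_eq] at h
  intro x hx
  exact h x (mem_KstarSet.mp hx)

lemma lam_symm_Kset_bool : (klist.all fun x => decide (lam.symm x ∈ Kset)) = true := by decide +kernel

lemma lam_symm_Kset : ∀ x ∈ Kset, lam.symm x ∈ Kset := by
  have h := lam_symm_Kset_bool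
  simp only [List.all_eq_true, decide_eq_true_eq] at h
  intro x hx
  exact h x (mem_Kset.mp hx)

lemma lam_symm_KstarSet_bool :
    (slist.all fun x => decide (lam.symm x ∈ KstarSet)) = true := by decide +kernel

lemma lam_symm_KstarSet : ∀ x ∈ KstarSet, lam.symm x ∈ KstarSet := by
  have h := lam_symm_KstarSet_bool
  simp only [List.all_eq_true, decide_eq_true_eq] at h
  intro x hx
  exact h x (mem_KstarSet.mp hx)

/-- The orbit property for `K`, in computable form. -/
abbrev orbProp (x y : H) : Prop :=
  y = 0 ∨ y = x ∨ y = lam x ∨ y = lam (lam x) ∨ y = lam (lam (lam x)) ∨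
    y = lam (lam (lam (lam x))) ∨ y = lam (lam (lam (lam (lam x)))) ∨
    y = lam (lam (lam (lam (lam (lam x)))))

lemma Kset_orbit_bool :
    (klist.all fun x => decide (x = 0) || klist.all fun y => decide (orbProp x y)) = true := by
  decide +kernel

lemma Kset_orbit : ∀ x ∈ Kset, x ≠ 0 → ∀ y ∈ Kset, orbProp x y := by
  have h := Kset_orbit_bool
  simp only [List.all_eq_true, Bool.or_eq_true, decide_eq_true_eq] at h
  intro x hx hx0 y hy
  rcases h x (mem_Kset.mp hx) with h' | h'
  · exact absurd h' hx0
  · exact h' y (mem_Kset.mp hy)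

lemma KstarSet_orbit_bool :
    (slist.all fun x => decide (x = 0) || slist.all fun y => decide (orbProp x y)) = true := by
  decide +kernel

lemma KstarSet_orbit : ∀ x ∈ KstarSet, x ≠ 0 → ∀ y ∈ KstarSet, orbProp x y := by
  have h := KstarSet_orbit_bool
  simp only [List.all_eq_true, Bool.or_eq_true, decide_eq_true_eq] at h
  intro x hx hx0 y hy
  rcases h x (mem_KstarSet.mp hx) with h' | h'
  · exact absurd h' hx0
  · exact h' y (mem_KstarSet.mp hy)

/-- The only `λ`-invariant subgroups of `H` are the trivial subgroup, `H` itself,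
`K = ⟨a₁a₃a₇, a₂a₃a₅, a₁a₂a₄⟩` and `K* = ⟨a₁a₂a₆, a₂a₃a₇, a₁a₃a₄⟩`. -/
theorem lambda_invariant_subgroups (K : AddSubgroup H) :
    K.map lam.toAddMonoidHom = K ↔
      K = ⊥ ∨ K = ⊤ ∨ K = Ksub ∨ K = KsubStar := by
  constructor
  · intro hK
    have hlam : ∀ x ∈ K, lam x ∈ K := by
      intro x hx
      rw [← hK]
      exact AddSubgroup.mem_map_of_mem _ hx
    have hp1 : ∀ x ∈ K, p1 x ∈ K := by
      intro x hx
      exact add_mem (add_mem (add_mem hx (hlam _ hx)) (hlam _ (hlam _ hx)))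
        (hlam _ (hlam _ (hlam _ (hlam _ hx))))
    have hp2 : ∀ x ∈ K, p2 x ∈ K := by
      intro x hx
      exact add_mem (add_mem (hlam _ hx) (hlam _ (hlam _ hx)))
        (hlam _ (hlam _ (hlam _ (hlam _ hx))))
    have hfullK : ∀ x ∈ K, x ∈ Kset → x ≠ 0 → KF ≤ K := by
      intro x hxK hxS hx0 y hy
      rw [mem_KF] at hy
      rcases (Kset_orbit x hxS hx0 y hy : orbProp _ _) with rfl | rfl | rfl | rfl | rfl | rfl | rfl | rfl
      · exact zero_mem K
      · exact hxK
      · exact hlam _ hxK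
      · exact hlam _ (hlam _ hxK)
      · exact hlam _ (hlam _ (hlam _ hxK))
      · exact hlam _ (hlam _ (hlam _ (hlam _ hxK)))
      · exact hlam _ (hlam _ (hlam _ (hlam _ (hlam _ hxK))))
      · exact hlam _ (hlam _ (hlam _ (hlam _ (hlam _ (hlam _ hxK)))))
    have hfullKs : ∀ x ∈ K, x ∈ KstarSet → x ≠ 0 → KstarF ≤ K := by
      intro x hxK hxS hx0 y hy
      rw [mem_KstarF] at hy
      rcases (KstarSet_orbit x hxS hx0 y hy : orbProp _ _) with rfl | rfl | rfl | rfl | rfl | rfl | rfl | rfl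
      · exact zero_mem K
      · exact hxK
      · exact hlam _ hxK
      · exact hlam _ (hlam _ hxK)
      · exact hlam _ (hlam _ (hlam _ hxK))
      · exact hlam _ (hlam _ (hlam _ (hlam _ hxK)))
      · exact hlam _ (hlam _ (hlam _ (hlam _ (hlam _ hxK))))
      · exact hlam _ (hlam _ (hlam _ (hlam _ (hlam _ (hlam _ hxK)))))
    by_cases hA : ∃ x ∈ K, x ∈ Kset ∧ x ≠ 0
    · by_cases hB : ∃ x ∈ K, x ∈ KstarSet ∧ x ≠ 0
      · -- K = ⊤
        right; left
        obtain ⟨x, hxK, hxS, hx0⟩ := hA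
        obtain ⟨y, hyK, hyS, hy0⟩ := hB
        have hKF := hfullK x hxK hxS hx0
        have hKsF := hfullKs y hyK hyS hy0
        rw [eq_top_iff]
        intro z _
        rw [← p_sum z]
        exact add_mem (hKsF (mem_KstarF.2 (p1_mem z))) (hKF (mem_KF.2 (p2_mem z)))
      · -- K = Ksub
        right; right; left
        push_neg at hB
        obtain ⟨x, hxK, hxS, hx0⟩ := hA
        rw [Ksub_eq_KF]
        apply le_antisymm
        · intro z hz
          have h1z : p1 z = 0 := hB _ (hp1 z hz) (p1_mem z)
          rw [mem_KF]
          have hs := p_sum z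
          rw [h1z, zero_add] at hs
          rw [← hs]
          exact p2_mem z
        · exact hfullK x hxK hxS hx0
    · by_cases hB : ∃ x ∈ K, x ∈ KstarSet ∧ x ≠ 0
      · -- K = KsubStar
        right; right; right
        push_neg at hA
        obtain ⟨y, hyK, hyS, hy0⟩ := hB
        rw [KsubStar_eq_KstarF]
        apply le_antisymm
        · intro z hz
          have h2z : p2 z = 0 := hA _ (hp2 z hz) (p2_mem z)
          rw [mem_KstarF]
          have hs := p_sum z
          rw [h2z, add_zero] at hs
          rw [← hs]
          exact p1_mem z
        · exact hfullKs y hyK hyS hy0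
      · -- K = ⊥
        left
        push_neg at hA
        push_neg at hB
        rw [eq_bot_iff]
        intro z hz
        have h1z : p1 z = 0 := hB _ (hp1 z hz) (p1_mem z)
        have h2z : p2 z = 0 := hA _ (hp2 z hz) (p2_mem z)
        have hs := p_sum z
        rw [h1z, h2z, add_zero] at hs
        exact hs ▸ AddSubgroup.mem_bot.2 rfl
  · have hmap : ∀ (S : AddSubgroup H),
        (∀ x, x ∈ S → lam x ∈ S) → (∀ x, x ∈ S → lam.symm x ∈ S) →
        S.map lam.toAddMonoidHom = S := by
      intro S h1 h2
      ext x
      rw [AddSubgroup.mem_map_equiv]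
      constructor
      · intro hx
        have := h1 _ hx
        rwa [AddEquiv.apply_symm_apply] at this
      · intro hx
        exact h2 _ hx
    rintro (rfl | rfl | rfl | rfl)
    · exact AddSubgroup.map_bot _
    · apply hmap <;> intro x _ <;> trivial
    · rw [Ksub_eq_KF]
      apply hmap
      · intro x hx
        exact mem_KF.2 (lam_Kset x (mem_KF.1 hx))
      · intro x hx
        exact mem_KF.2 (lam_symm_Kset x (mem_KF.1 hx))
    · rw [KsubStar_eq_KstarF]
      apply hmap
      · intro x hx
        exact mem_KstarF.2 (lam_KstarSet x (mem_KstarF.1 hx))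
      · intro x hx
        exact mem_KstarF.2 (lam_symm_KstarSet x (mem_KstarF.1 hx))
end

section
/- In the group H ≅ (ℤ/2ℤ)^6 generated by a₁,…,a₇ with relation a₁⋯a₇ = 1, if a subgroup K is invariant under λ: aⱼ ↦ a_{j+1 mod 7} and contains a₁a₂a₃, then K = H. -/
lemma lam_a (j : Fin 7) : lam (a j) = a (j + 1) := by
  show QuotientAddGroup.mk _ = _
  unfold a
  congr 1
  funext i
  simp only [permV, cLam, Equiv.coe_addRight, Equiv.addRight_symm, AddEquiv.coe_mk,
    Equiv.coe_fn_mk, Function.comp_apply, Pi.single_apply]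
  by_cases hij : i = j + 1
  · subst hij
    have e : j + 1 + -1 = j := add_neg_cancel_right j 1
    simp [Pi.single_apply, e]
  · have : i + -1 ≠ j := fun hh => hij (by rw [← hh]; exact (neg_add_cancel_right i 1).symm)
    simp [hij, this]

/-- Any `λ`-invariant subgroup of `H` containing `a₁a₂a₃` equals `H`. -/
theorem lambda_invariant_with_a1a2a3 (K : AddSubgroup H)
    (hinv : K.map lam.toAddMonoidHom = K) (h : a 0 + a 1 + a 2 ∈ K) :
    K = ⊤ := by
  have hK : ∀ x ∈ K, lam x ∈ K := by
    intro x hx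
    rw [← hinv]
    exact AddSubgroup.mem_map_of_mem _ hx
  have step : ∀ j : Fin 7, a j + a (j+1) + a (j+2) ∈ K →
      a (j+1) + a (j+2) + a (j+3) ∈ K := by
    intro j hj
    have := hK _ hj
    have e1 : j + 1 + 1 = j + 2 := by rw [add_assoc]; rfl
    have e2 : j + 2 + 1 = j + 3 := by rw [add_assoc]; rfl
    simpa [map_add, lam_a, e1, e2] using this
  have h0 : a 0 + a 1 + a 2 ∈ K := h
  have h1 : a 1 + a 2 + a 3 ∈ K := step 0 h0
  have h2 : a 2 + a 3 + a 4 ∈ K := step 1 h1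
  have h3 : a 3 + a 4 + a 5 ∈ K := step 2 h2
  have h4 : a 4 + a 5 + a 6 ∈ K := step 3 h3
  have h5 : a 5 + a 6 + a 0 ∈ K := step 4 h4
  have h6 : a 6 + a 0 + a 1 ∈ K := step 5 h5
  have key : (Pi.single (0:Fin 7) (1:ZMod 2) : V) =
      (((((Pi.single 0 1 + Pi.single 1 1 + Pi.single 2 1 : V) +
      (Pi.single 2 1 + Pi.single 3 1 + Pi.single 4 1 : V) : V) +
      (Pi.single 3 1 + Pi.single 4 1 + Pi.single 5 1 : V) : V) +
      (Pi.single 5 1 + Pi.single 6 1 + Pi.single 0 1 : V) : V) +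
      (Pi.single 6 1 + Pi.single 0 1 + Pi.single 1 1 : V) : V) := by decide
  have ha0 : a 0 ∈ K := by
    have e : a 0 = (a 0 + a 1 + a 2) + (a 2 + a 3 + a 4) + (a 3 + a 4 + a 5) +
        (a 5 + a 6 + a 0) + (a 6 + a 0 + a 1) := by
      show QuotientAddGroup.mk _ = _
      simp only [a, ← QuotientAddGroup.mk_add]
      exact congrArg _ key
    rw [e]
    exact add_mem (add_mem (add_mem (add_mem h0 h2) h3) h5) h6
  have next : ∀ j : Fin 7, a j ∈ K → a (j+1) ∈ K := by
    intro j hj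
    have := hK _ hj
    rwa [lam_a] at this
  have ha1 : a 1 ∈ K := next 0 ha0
  have ha2 : a 2 ∈ K := next 1 ha1
  have ha3 : a 3 ∈ K := next 2 ha2
  have ha4 : a 4 ∈ K := next 3 ha3
  have ha5 : a 5 ∈ K := next 4 ha4
  have ha6 : a 6 ∈ K := next 5 ha5
  have ha : ∀ j : Fin 7, a j ∈ K := by
    intro j; fin_cases j <;> assumption
  rw [eq_top_iff]
  rintro x -
  induction x using QuotientAddGroup.induction_on with
  | H v =>
    rw [pi_eq_sum_univ v]
    have e : (QuotientAddGroup.mk (∑ i, v i • fun j => if i = j then (1:ZMod 2) else 0) : H)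
        = ∑ i, QuotientAddGroup.mk (v i • fun j => if i = j then (1:ZMod 2) else 0) :=
      map_sum (QuotientAddGroup.mk' W) _ _
    rw [e]
    refine sum_mem fun i _ => ?_
    have hc : v i = 0 ∨ v i = 1 := by
      have : ∀ c : ZMod 2, c = 0 ∨ c = 1 := by decide
      exact this _
    rcases hc with hc | hc
    · simp only [hc, zero_smul]
      exact zero_mem K
    · rw [hc, one_smul]
      have : (QuotientAddGroup.mk (fun j => if i = j then (1:ZMod 2) else 0) : H) = a i := by
        unfold a
        congr 1
        funext j
        simp [Pi.single_apply, eq_comm]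
      rw [this]
      exact ha i
end

section
/- Let ρ = e^{2πi/7}, A(x) = (1+ρ)(x−ρ)/(ρ(x−1)), and set μ₄ = A(ρ³), μ₅ = A(ρ⁴), μ₆ = A(ρ⁵), μ₇ = A(ρ⁶). Then μ₆ = μ₅²/μ₄ and μ₇ = μ₅². -/
/-- `ρ = e^{2πi/7}`. -/
noncomputable def ρ : ℂ := Complex.exp (2 * Real.pi * Complex.I / 7)

/-- The Möbius transformation `A(x) = (1+ρ)(x−ρ)/(ρ(x−1))`. -/
noncomputable def Amap (x : ℂ) : ℂ := (1 + ρ) * (x - ρ) / (ρ * (x - 1))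

lemma hprim : IsPrimitiveRoot ρ 7 := by
  have := Complex.isPrimitiveRoot_exp 7 (by norm_num)
  simpa [ρ] using this

lemma h7 : ρ ^ 7 = 1 := hprim.pow_eq_one

lemma hpk {k : ℕ} (h1 : 0 < k) (h2 : k < 7) : ρ ^ k ≠ 1 :=
  hprim.pow_ne_one_of_pos_of_lt h1.ne' h2

lemma h0 : ρ ≠ 0 := by
  intro h
  have := h7
  rw [h] at this
  norm_num at this

lemma hne1 : ρ ≠ 1 := by
  have := hpk (k := 1) (by norm_num) (by norm_num)
  simpa using this

lemma hne_neg1 : 1 + ρ ≠ 0 := by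
  intro h
  have hρ : ρ = -1 := by linear_combination h
  have := h7
  rw [hρ] at this
  norm_num at this

/-- With `μ₄ = A(ρ³), μ₅ = A(ρ⁴), μ₆ = A(ρ⁵), μ₇ = A(ρ⁶)`, one has
`μ₆ = μ₅²/μ₄` and `μ₇ = μ₅²`. -/
theorem mu_relations :
    Amap (ρ ^ 5) = (Amap (ρ ^ 4)) ^ 2 / Amap (ρ ^ 3) ∧
    Amap (ρ ^ 6) = (Amap (ρ ^ 4)) ^ 2 := by
  have h3 : ρ ^ 3 - 1 ≠ 0 := sub_ne_zero.mpr (hpk (by norm_num) (by norm_num))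
  have h4 : ρ ^ 4 - 1 ≠ 0 := sub_ne_zero.mpr (hpk (by norm_num) (by norm_num))
  have h5 : ρ ^ 5 - 1 ≠ 0 := sub_ne_zero.mpr (hpk (by norm_num) (by norm_num))
  have h6 : ρ ^ 6 - 1 ≠ 0 := sub_ne_zero.mpr (hpk (by norm_num) (by norm_num))
  have h2 : ρ ^ 2 - 1 ≠ 0 := sub_ne_zero.mpr (hpk (by norm_num) (by norm_num))
  have h3ρ : ρ ^ 3 - ρ ≠ 0 := by
    intro h; apply h2
    have : ρ * (ρ ^ 2 - 1) = 0 := by linear_combination h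
    rcases mul_eq_zero.mp this with h' | h'
    · exact absurd h' h0
    · exact h'
  have hD3 : ρ * (ρ ^ 3 - 1) ≠ 0 := mul_ne_zero h0 h3
  have hD4 : ρ * (ρ ^ 4 - 1) ≠ 0 := mul_ne_zero h0 h4
  have hD5 : ρ * (ρ ^ 5 - 1) ≠ 0 := mul_ne_zero h0 h5
  have hD6 : ρ * (ρ ^ 6 - 1) ≠ 0 := mul_ne_zero h0 h6
  have hA3 : Amap (ρ ^ 3) ≠ 0 :=
    div_ne_zero (mul_ne_zero hne_neg1 h3ρ) hD3
  constructor
  · rw [eq_div_iff hA3]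
    rw [Amap, Amap, Amap, div_mul_div_comm, div_pow,
      div_eq_div_iff (mul_ne_zero hD5 hD3) (pow_ne_zero 2 hD4)]
    linear_combination (ρ ^ 6 - ρ ^ 7 - 2 * ρ ^ 8 + 2 * ρ ^ 9 + ρ ^ 10 - ρ ^ 11) * h7
  · rw [Amap, Amap, div_pow,
      div_eq_div_iff hD6 (pow_ne_zero 2 hD4)]
    linear_combination (-ρ ^ 4 - ρ ^ 5 + 2 * ρ ^ 6 + 2 * ρ ^ 7 - ρ ^ 8 - ρ ^ 9) * h7
end

section
/- Let μ₄, μ₅, μ₆, μ₇ ∈ ℂ be pairwise distinct with each μⱼ ∉ {0,1}, and let (x₁,…,x₇) ∈ ℂ⁷ be a nonzero solution of the system x₁²+x₂²+x₃²=0, μ₄x₁²+x₂²+x₄²=0, μ₅x₁²+x₂²+x₅²=0, μ₆x₁²+x₂²+x₆²=0, μ₇x₁²+x₂²+x₇²=0. Then at most one of the coordinates x₁,…,x₇ is zero. -/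
/-- Two independent linear relations force both variables to vanish. -/
lemma det_aux {a b c1 d1 c2 d2 : ℂ} (hdet : c1 * d2 - c2 * d1 ≠ 0)
    (e1 : c1 * a + d1 * b = 0) (e2 : c2 * a + d2 * b = 0) : a = 0 ∧ b = 0 := by
  constructor
  · have h : (c1 * d2 - c2 * d1) * a = 0 := by linear_combination d2 * e1 - d1 * e2
    exact (mul_eq_zero.mp h).resolve_left hdet
  · have h : (c1 * d2 - c2 * d1) * b = 0 := by linear_combination c1 * e2 - c2 * e1
    exact (mul_eq_zero.mp h).resolve_left hdet

/-- At any nonzero solution of the five quadrics defining `Ŝ_μ`, at most one of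
the seven coordinates vanishes. -/
theorem at_most_one_zero_coordinate (μ₄ μ₅ μ₆ μ₇ : ℂ)
    (h01 : ∀ μ ∈ ({μ₄, μ₅, μ₆, μ₇} : Set ℂ), μ ≠ 0 ∧ μ ≠ 1)
    (hdist : μ₄ ≠ μ₅ ∧ μ₄ ≠ μ₆ ∧ μ₄ ≠ μ₇ ∧ μ₅ ≠ μ₆ ∧ μ₅ ≠ μ₇ ∧ μ₆ ≠ μ₇)
    (x : Fin 7 → ℂ) (hx : x ≠ 0)
    (h1 : x 0 ^ 2 + x 1 ^ 2 + x 2 ^ 2 = 0)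
    (h2 : μ₄ * x 0 ^ 2 + x 1 ^ 2 + x 3 ^ 2 = 0)
    (h3 : μ₅ * x 0 ^ 2 + x 1 ^ 2 + x 4 ^ 2 = 0)
    (h4 : μ₆ * x 0 ^ 2 + x 1 ^ 2 + x 5 ^ 2 = 0)
    (h5 : μ₇ * x 0 ^ 2 + x 1 ^ 2 + x 6 ^ 2 = 0) :
    ∀ i j : Fin 7, x i = 0 → x j = 0 → i = j := by
  obtain ⟨h40, h41⟩ := h01 μ₄ (by simp)
  obtain ⟨h50, h51⟩ := h01 μ₅ (by simp)
  obtain ⟨h60, h61⟩ := h01 μ₆ (by simp)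
  obtain ⟨h70, h71⟩ := h01 μ₇ (by simp)
  obtain ⟨d45, d46, d47, d56, d57, d67⟩ := hdist
  -- If x₀² = 0 and x₁² = 0 then every square vanishes, contradicting x ≠ 0.
  have hall : x 0 ^ 2 = 0 → x 1 ^ 2 = 0 → False := by
    intro ha hb
    have e2 : x 2 ^ 2 = 0 := by linear_combination h1 - ha - hb
    have e3 : x 3 ^ 2 = 0 := by linear_combination h2 - μ₄ * ha - hb
    have e4 : x 4 ^ 2 = 0 := by linear_combination h3 - μ₅ * ha - hb
    have e5 : x 5 ^ 2 = 0 := by linear_combination h4 - μ₆ * ha - hb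
    have e6 : x 6 ^ 2 = 0 := by linear_combination h5 - μ₇ * ha - hb
    apply hx
    funext k
    have hk : x k ^ 2 = 0 := by
      fin_cases k <;>
        first
        | exact ha
        | exact hb
        | exact e2
        | exact e3
        | exact e4
        | exact e5
        | exact e6
    simp only [Pi.zero_apply]
    exact pow_eq_zero_iff two_ne_zero |>.mp hk
  have pair : ∀ {c1 d1 c2 d2 : ℂ}, c1 * d2 - c2 * d1 ≠ 0 →
      c1 * x 0 ^ 2 + d1 * x 1 ^ 2 = 0 → c2 * x 0 ^ 2 + d2 * x 1 ^ 2 = 0 → False := by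
    intro c1 d1 c2 d2 hdet e1 e2
    obtain ⟨ha, hb⟩ := det_aux hdet e1 e2
    exact hall ha hb
  -- For each coordinate, vanishing of its square gives a linear relation on x₀², x₁².
  have E0 : x 0 ^ 2 = 0 → (1:ℂ) * x 0 ^ 2 + 0 * x 1 ^ 2 = 0 := fun h => by linear_combination h
  have E1 : x 1 ^ 2 = 0 → (0:ℂ) * x 0 ^ 2 + 1 * x 1 ^ 2 = 0 := fun h => by linear_combination h
  have E2 : x 2 ^ 2 = 0 → (1:ℂ) * x 0 ^ 2 + 1 * x 1 ^ 2 = 0 := fun h => by linear_combination h1 - h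
  have E3 : x 3 ^ 2 = 0 → μ₄ * x 0 ^ 2 + 1 * x 1 ^ 2 = 0 := fun h => by linear_combination h2 - h
  have E4 : x 4 ^ 2 = 0 → μ₅ * x 0 ^ 2 + 1 * x 1 ^ 2 = 0 := fun h => by linear_combination h3 - h
  have E5 : x 5 ^ 2 = 0 → μ₆ * x 0 ^ 2 + 1 * x 1 ^ 2 = 0 := fun h => by linear_combination h4 - h
  have E6 : x 6 ^ 2 = 0 → μ₇ * x 0 ^ 2 + 1 * x 1 ^ 2 = 0 := fun h => by linear_combination h5 - h
  intro i j hi hj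
  by_contra hij
  have hi2 : x i ^ 2 = 0 := by rw [hi]; ring
  have hj2 : x j ^ 2 = 0 := by rw [hj]; ring
  fin_cases i <;> fin_cases j <;>
    first
    | exact hij rfl
    | exact pair (by norm_num) (E0 hi2) (E1 hj2)
    | exact pair (by norm_num) (E0 hj2) (E1 hi2)
    | exact pair (by norm_num) (E0 hi2) (E2 hj2)
    | exact pair (by norm_num) (E0 hj2) (E2 hi2)
    | exact pair (by norm_num) (E0 hi2) (E3 hj2)
    | exact pair (by norm_num) (E0 hj2) (E3 hi2)
    | exact pair (by norm_num) (E0 hi2) (E4 hj2)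
    | exact pair (by norm_num) (E0 hj2) (E4 hi2)
    | exact pair (by norm_num) (E0 hi2) (E5 hj2)
    | exact pair (by norm_num) (E0 hj2) (E5 hi2)
    | exact pair (by norm_num) (E0 hi2) (E6 hj2)
    | exact pair (by norm_num) (E0 hj2) (E6 hi2)
    | exact pair (by norm_num) (E1 hi2) (E2 hj2)
    | exact pair (by norm_num) (E1 hj2) (E2 hi2)
    | exact pair (by simpa using h40) (E1 hi2) (E3 hj2)
    | exact pair (by simpa using h40) (E1 hj2) (E3 hi2)
    | exact pair (by simpa using h50) (E1 hi2) (E4 hj2)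
    | exact pair (by simpa using h50) (E1 hj2) (E4 hi2)
    | exact pair (by simpa using h60) (E1 hi2) (E5 hj2)
    | exact pair (by simpa using h60) (E1 hj2) (E5 hi2)
    | exact pair (by simpa using h70) (E1 hi2) (E6 hj2)
    | exact pair (by simpa using h70) (E1 hj2) (E6 hi2)
    | exact pair (by simpa using sub_ne_zero.mpr (Ne.symm h41)) (E2 hi2) (E3 hj2)
    | exact pair (by simpa using sub_ne_zero.mpr (Ne.symm h41)) (E2 hj2) (E3 hi2)
    | exact pair (by simpa using sub_ne_zero.mpr (Ne.symm h51)) (E2 hi2) (E4 hj2)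
    | exact pair (by simpa using sub_ne_zero.mpr (Ne.symm h51)) (E2 hj2) (E4 hi2)
    | exact pair (by simpa using sub_ne_zero.mpr (Ne.symm h61)) (E2 hi2) (E5 hj2)
    | exact pair (by simpa using sub_ne_zero.mpr (Ne.symm h61)) (E2 hj2) (E5 hi2)
    | exact pair (by simpa using sub_ne_zero.mpr (Ne.symm h71)) (E2 hi2) (E6 hj2)
    | exact pair (by simpa using sub_ne_zero.mpr (Ne.symm h71)) (E2 hj2) (E6 hi2)
    | exact pair (by simpa using sub_ne_zero.mpr d45) (E3 hi2) (E4 hj2)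
    | exact pair (by simpa using sub_ne_zero.mpr d45) (E3 hj2) (E4 hi2)
    | exact pair (by simpa using sub_ne_zero.mpr d46) (E3 hi2) (E5 hj2)
    | exact pair (by simpa using sub_ne_zero.mpr d46) (E3 hj2) (E5 hi2)
    | exact pair (by simpa using sub_ne_zero.mpr d47) (E3 hi2) (E6 hj2)
    | exact pair (by simpa using sub_ne_zero.mpr d47) (E3 hj2) (E6 hi2)
    | exact pair (by simpa using sub_ne_zero.mpr d56) (E4 hi2) (E5 hj2)
    | exact pair (by simpa using sub_ne_zero.mpr d56) (E4 hj2) (E5 hi2)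
    | exact pair (by simpa using sub_ne_zero.mpr d57) (E4 hi2) (E6 hj2)
    | exact pair (by simpa using sub_ne_zero.mpr d57) (E4 hj2) (E6 hi2)
    | exact pair (by simpa using sub_ne_zero.mpr d67) (E5 hi2) (E6 hj2)
    | exact pair (by simpa using sub_ne_zero.mpr d67) (E5 hj2) (E6 hi2)
end
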